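/- Let f, g₁,…,gₛ, h₁,…,hₖ be partial n-place functions on A and let i₁,…,iₛ, j₁,…,jₖ ∈ {1,…,n}. For each i define μᵢ(∘ᵢ₁…∘ᵢₛ g₁…gₛ) = g_p ∘ᵢ_{p+1} g_{p+1} ⋯ ∘ᵢₛ gₛ where p is the least index with i_p = i (undefined if no such p exists). If for every i ∈ {1,…,n}, μᵢ of the first composition sequence equals μᵢ of the second (both defined and equal, or both undefined), then f ∘ᵢ₁ g₁ ⋯ ∘ᵢₛ gₛ = f ∘ⱼ₁ h₁ ⋯ ∘ⱼₖ hₖ. -/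

import Mathlib

/-- The type of partial `n`-place functions on `A`. -/
abbrev PFn (n : ℕ) (A : Type) := (Fin n → A) → Option A

/-- Menger superposition `f[g₁ … gₙ]`. -/
def Menger {n : ℕ} {A : Type} (f : PFn n A) (g : Fin n → PFn n A) : PFn n A :=
  fun a => if h : ∀ i, (g i a).isSome then f (fun i => (g i a).get (h i)) else none

/-- The `i`-th `n`-place projector `Iⁱ`. -/
def proj {n : ℕ} {A : Type} (i : Fin n) : PFn n A := fun a => some (a i)

/-- The `i`-th Mann composition `f ∘ᵢ g`. -/
def mann {n : ℕ} {A : Type} (i : Fin n) (f g : PFn n A) : PFn n A :=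
  fun a => (g a).bind fun b => f (Function.update a i b)

/-- Iterated Mann composition `f ∘ᵢ₁ g₁ ∘ᵢ₂ ⋯ ∘ᵢₛ gₛ` (left to right). -/
def iter {n : ℕ} {A : Type} (f : PFn n A) : List (Fin n × PFn n A) → PFn n A
  | [] => f
  | p :: l => iter (mann p.1 f p.2) l

/-- `μᵢ(∘ᵢ₁ … ∘ᵢₛ g₁ … gₛ)`. -/
def mu {n : ℕ} {A : Type} (i : Fin n) : List (Fin n × PFn n A) → Option (PFn n A)
  | [] => none
  | p :: l => if p.1 = i then some (iter p.2 l) else mu i l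

lemma iter_eq_menger {n : ℕ} {A : Type} :
    ∀ (l : List (Fin n × PFn n A)) (f : PFn n A),
      iter f l = Menger f (fun i => (mu i l).getD (proj i)) := by
  intro l
  induction l with
  | nil =>
    intro f; funext a
    simp [iter, mu, Menger, proj]
  | cons p l ih =>
    rcases p with ⟨j, g⟩
    intro f; funext a
    show iter (mann j f g) l a = _
    rw [ih (mann j f g)]
    have hG : (fun i => (mu i ((j,g)::l)).getD (proj i))
        = fun i => if j = i then Menger g (fun i => (mu i l).getD (proj i)) else (mu i l).getD (proj i) := by
      funext i
      simp only [mu]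
      split
      · simp [← ih g]
      · rfl
    rw [hG]
    set G' : Fin n → PFn n A := fun i => (mu i l).getD (proj i) with hG'
    simp only [show ∀ i, (mu i l).getD (proj i) = G' i from fun i => rfl]
    by_cases h : ∀ i, (G' i a).isSome
    · set c : Fin n → A := fun i => (G' i a).get (h i) with hc'
      have hGc : Menger g G' a = g c := by simp [Menger, h]; rfl
      have hL : Menger (mann j f g) G' a = mann j f g c := by simp [Menger, h]; rfl
      rw [hL]
      rcases hgc : g c with _ | b
      · have hno : ¬ ∀ i, ((if j = i then Menger g G' else G' i) a).isSome := by
          intro hh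
          have := hh j
          simp [hGc, hgc] at this
        simp [Menger, hno, mann, hgc]
      · have hall : ∀ i, ((if j = i then Menger g G' else G' i) a).isSome := by
          intro i
          by_cases hij : j = i <;> simp [hij, hGc, hgc, h i]
        simp only [Menger, dif_pos hall, mann, hgc, Option.bind_some]
        congr 1
        funext i
        by_cases hij : i = j
        · subst hij
          simp [Function.update_self, hGc, hgc]
        · simp [Function.update_of_ne hij, Ne.symm hij]; rfl
    · obtain ⟨i₀, hi₀⟩ := not_forall.mp h
      have hnone : Menger g G' a = none := by
        unfold Menger
        exact dif_neg (fun hh => hi₀ (hh i₀))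
      have hno : ¬ ∀ i, ((if j = i then Menger g G' else G' i) a).isSome := by
        intro hh
        have h2 := hh i₀
        by_cases hij : j = i₀
        · rw [if_pos hij, hnone] at h2
          simp at h2
        · rw [if_neg hij] at h2
          exact hi₀ h2
      simp only [Menger, dif_neg hno, dif_neg h]

theorem iter_eq_of_mu_eq {n : ℕ} {A : Type} (f : PFn n A)
    (l₁ l₂ : List (Fin n × PFn n A)) (h : ∀ i, mu i l₁ = mu i l₂) :
    iter f l₁ = iter f l₂ := by
  rw [iter_eq_menger, iter_eq_menger]
  have : (fun i => ((mu i l₁ : Option (PFn n A)).getD (proj i)))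
      = fun i => (mu i l₂).getD (proj i) := funext fun i => by rw [h i]
  rw [this]
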